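/- Let F ⊆ ([n] choose k) be a saturated intersecting family with covering number 3, and suppose the family T of 3-element covers of F is nonempty and non-trivial (no common element). Then either T equals the complete 3-uniform hypergraph on some 4 vertices, or T contains three sets isomorphic (as a 3-uniform hypergraph) to S = {{1,2,3},{1,4,5},{2,4,6}} or to R = {{1,2,3},{1,4,5},{2,3,5}}. -/

import Mathlib

open Finset

private lemma inj_extend (s : Finset ℕ) (v : ℕ → ℕ)
    (hinj : ∀ i ∈ s, ∀ j ∈ s, v i = v j → i = j) :
    ∃ f : ℕ → ℕ, Function.Injective f ∧ ∀ i ∈ s, f i = v i := by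
  classical
  set N := (s.image v).sup id + 1 with hN
  have hvN : ∀ i ∈ s, v i < N := by
    intro i hi
    have : v i ≤ (s.image v).sup id := Finset.le_sup (f := id) (mem_image_of_mem v hi)
    omega
  refine ⟨fun i => if i ∈ s then v i else i + N, ?_, ?_⟩
  · intro i j hij
    simp only at hij
    by_cases hi : i ∈ s <;> by_cases hj : j ∈ s
    · rw [if_pos hi, if_pos hj] at hij; exact hinj i hi j hj hij
    · rw [if_pos hi, if_neg hj] at hij; have := hvN i hi; omega
    · rw [if_neg hi, if_pos hj] at hij; have := hvN j hj; omega
    · rw [if_neg hi, if_neg hj] at hij; omega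
  · intro i hi; simp [hi]

private lemma eq_three (X : Finset ℕ) (h3 : X.card = 3) (a b c : ℕ)
    (ha : a ∈ X) (hb : b ∈ X) (hc : c ∈ X)
    (hab : a ≠ b) (hac : a ≠ c) (hbc : b ≠ c) : X = {a, b, c} := by
  have hsub : ({a, b, c} : Finset ℕ) ⊆ X := by
    intro t ht
    simp only [mem_insert, mem_singleton] at ht
    rcases ht with rfl | rfl | rfl <;> assumption
  have hcard : ({a, b, c} : Finset ℕ).card = 3 :=
    card_eq_three.mpr ⟨a, b, c, hab, hac, hbc, rfl⟩
  exact (eq_of_subset_of_card_le hsub (by omega)).symm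

private lemma third (X : Finset ℕ) (h3 : X.card = 3) (p q : ℕ)
    (hp : p ∈ X) (hq : q ∈ X) (hpq : p ≠ q) :
    ∃ x, x ∈ X ∧ x ≠ p ∧ x ≠ q ∧ X = {p, q, x} := by
  have hsub : ({p, q} : Finset ℕ) ⊆ X := by
    intro t ht
    simp only [mem_insert, mem_singleton] at ht
    rcases ht with rfl | rfl <;> assumption
  have h2 : ({p, q} : Finset ℕ).card = 2 := by
    rw [card_insert_of_notMem (by simp [hpq]), card_singleton]
  have hnonempty : (X \ {p, q}).Nonempty := by
    rw [← card_pos, card_sdiff_of_subset hsub]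
    omega
  obtain ⟨x, hx⟩ := hnonempty
  rw [mem_sdiff] at hx
  obtain ⟨hxX, hxpq⟩ := hx
  simp only [mem_insert, mem_singleton, not_or] at hxpq
  exact ⟨x, hxX, hxpq.1, hxpq.2,
    eq_three X h3 p q x hp hq hxX hpq (Ne.symm hxpq.1) (Ne.symm hxpq.2)⟩

/-- Producing a copy of `S = {{1,2,3},{1,4,5},{2,4,6}}`. -/
private lemma copyS (T : Finset (Finset ℕ)) (X Y Z : Finset ℕ)
    (hX : X ∈ T) (hY : Y ∈ T) (hZ : Z ∈ T)
    (a b c d e g : ℕ)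
    (hab : a ≠ b) (hac : a ≠ c) (had : a ≠ d) (hae : a ≠ e) (hag : a ≠ g)
    (hbc : b ≠ c) (hbd : b ≠ d) (hbe : b ≠ e) (hbg : b ≠ g)
    (hcd : c ≠ d) (hce : c ≠ e) (hcg : c ≠ g)
    (hde : d ≠ e) (hdg : d ≠ g) (heg : e ≠ g)
    (hXe : X = {a, b, c}) (hYe : Y = {a, d, e}) (hZe : Z = {b, d, g}) :
    ∃ f : ℕ → ℕ, Function.Injective f ∧
      ∀ W ∈ ({({1, 2, 3} : Finset ℕ), {1, 4, 5}, {2, 4, 6}} : Finset (Finset ℕ)),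
        W.image f ∈ T := by
  classical
  set v : ℕ → ℕ := fun i => if i = 1 then a else if i = 2 then b else if i = 3 then c
    else if i = 4 then d else if i = 5 then e else g with hv
  have hvinj : ∀ i ∈ ({1, 2, 3, 4, 5, 6} : Finset ℕ), ∀ j ∈ ({1, 2, 3, 4, 5, 6} : Finset ℕ),
      v i = v j → i = j := by
    intro i hi j hj hij
    rw [hv] at hij
    fin_cases hi <;> fin_cases hj <;> simp_all
  obtain ⟨f, hfinj, hf⟩ := inj_extend {1, 2, 3, 4, 5, 6} v hvinj
  · have h1 : f 1 = a := by have := hf 1 (by decide); simpa [hv] using this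
    have h2 : f 2 = b := by have := hf 2 (by decide); simpa [hv] using this
    have h3 : f 3 = c := by have := hf 3 (by decide); simpa [hv] using this
    have h4 : f 4 = d := by have := hf 4 (by decide); simpa [hv] using this
    have h5 : f 5 = e := by have := hf 5 (by decide); simpa [hv] using this
    have h6 : f 6 = g := by have := hf 6 (by decide); simpa [hv] using this
    refine ⟨f, hfinj, ?_⟩
    intro W hW
    simp only [mem_insert, mem_singleton] at hW
    rcases hW with rfl | rfl | rfl
    · have : ({1, 2, 3} : Finset ℕ).image f = {a, b, c} := by
        simp [Finset.image_insert, h1, h2, h3]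
      rw [this, ← hXe]; exact hX
    · have : ({1, 4, 5} : Finset ℕ).image f = {a, d, e} := by
        simp [Finset.image_insert, h1, h4, h5]
      rw [this, ← hYe]; exact hY
    · have : ({2, 4, 6} : Finset ℕ).image f = {b, d, g} := by
        simp [Finset.image_insert, h2, h4, h6]
      rw [this, ← hZe]; exact hZ

/-- Producing a copy of `R = {{1,2,3},{1,4,5},{2,3,5}}` from the configuration
`X = {a,b,c}`, `Y = {a,b,d}`, `Z = {c,d,e}`. -/
private lemma copyR (T : Finset (Finset ℕ)) (X Y Z : Finset ℕ)
    (hX : X ∈ T) (hY : Y ∈ T) (hZ : Z ∈ T)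
    (a b c d e : ℕ)
    (hab : a ≠ b) (hac : a ≠ c) (had : a ≠ d) (hae : a ≠ e)
    (hbc : b ≠ c) (hbd : b ≠ d) (hbe : b ≠ e)
    (hcd : c ≠ d) (hce : c ≠ e) (hde : d ≠ e)
    (hXe : X = {a, b, c}) (hYe : Y = {a, b, d}) (hZe : Z = {c, d, e}) :
    ∃ f : ℕ → ℕ, Function.Injective f ∧
      ∀ W ∈ ({({1, 2, 3} : Finset ℕ), {1, 4, 5}, {2, 3, 5}} : Finset (Finset ℕ)),
        W.image f ∈ T := by
  classical
  set v : ℕ → ℕ := fun i => if i = 1 then c else if i = 2 then a else if i = 3 then b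
    else if i = 4 then e else d with hv
  have hvinj : ∀ i ∈ ({1, 2, 3, 4, 5} : Finset ℕ), ∀ j ∈ ({1, 2, 3, 4, 5} : Finset ℕ),
      v i = v j → i = j := by
    intro i hi j hj hij
    rw [hv] at hij
    fin_cases hi <;> fin_cases hj <;> simp_all
  obtain ⟨f, hfinj, hf⟩ := inj_extend {1, 2, 3, 4, 5} v hvinj
  · have h1 : f 1 = c := by have := hf 1 (by decide); simpa [hv] using this
    have h2 : f 2 = a := by have := hf 2 (by decide); simpa [hv] using this
    have h3 : f 3 = b := by have := hf 3 (by decide); simpa [hv] using this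
    have h4 : f 4 = e := by have := hf 4 (by decide); simpa [hv] using this
    have h5 : f 5 = d := by have := hf 5 (by decide); simpa [hv] using this
    refine ⟨f, hfinj, ?_⟩
    intro W hW
    simp only [mem_insert, mem_singleton] at hW
    rcases hW with rfl | rfl | rfl
    · have : ({1, 2, 3} : Finset ℕ).image f = {a, b, c} := by
        rw [show ({1, 2, 3} : Finset ℕ).image f = {f 1, f 2, f 3} by
          simp [Finset.image_insert]]
        rw [h1, h2, h3]
        ext t; simp only [mem_insert, mem_singleton]; tauto
      rw [this, ← hXe]; exact hX
    · have : ({1, 4, 5} : Finset ℕ).image f = {c, d, e} := by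
        rw [show ({1, 4, 5} : Finset ℕ).image f = {f 1, f 4, f 5} by
          simp [Finset.image_insert]]
        rw [h1, h4, h5]
        ext t; simp only [mem_insert, mem_singleton]; tauto
      rw [this, ← hZe]; exact hZ
    · have : ({2, 3, 5} : Finset ℕ).image f = {a, b, d} := by
        rw [show ({2, 3, 5} : Finset ℕ).image f = {f 2, f 3, f 5} by
          simp [Finset.image_insert]]
        rw [h2, h3, h5]
      rw [this, ← hYe]; exact hY

private lemma structure_lemma (T : Finset (Finset ℕ))
    (h3 : ∀ X ∈ T, X.card = 3)
    (hI : ∀ X ∈ T, ∀ Y ∈ T, (X ∩ Y).Nonempty)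
    (hne : T.Nonempty)
    (hnt : ∀ x : ℕ, ∃ X ∈ T, x ∉ X) :
    (∃ V : Finset ℕ, V.card = 4 ∧ T = V.powersetCard 3) ∨
    (∃ f : ℕ → ℕ, Function.Injective f ∧
      ∀ X ∈ ({({1, 2, 3} : Finset ℕ), {1, 4, 5}, {2, 4, 6}} : Finset (Finset ℕ)),
        X.image f ∈ T) ∨
    (∃ f : ℕ → ℕ, Function.Injective f ∧
      ∀ X ∈ ({({1, 2, 3} : Finset ℕ), {1, 4, 5}, {2, 3, 5}} : Finset (Finset ℕ)),
        X.image f ∈ T) := by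
  classical
  by_cases hC : ∃ X ∈ T, ∃ Y ∈ T, ∃ Z ∈ T, X ∩ Y ∩ Z = ∅
  · -- three sets with empty common intersection: copy of S or R
    obtain ⟨X, hX, Y, hY, Z, hZ, hXYZ⟩ := hC
    have trip : ∀ t, t ∈ X → t ∈ Y → t ∈ Z → False := by
      intro t h1 h2 h3
      have : t ∈ X ∩ Y ∩ Z := by simp [mem_inter, h1, h2, h3]
      rw [hXYZ] at this
      simp at this
    obtain ⟨p, hp⟩ := hI X hX Y hY
    rw [mem_inter] at hp
    obtain ⟨hpX, hpY⟩ := hp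
    obtain ⟨q, hq⟩ := hI X hX Z hZ
    rw [mem_inter] at hq
    obtain ⟨hqX, hqZ⟩ := hq
    obtain ⟨r, hr⟩ := hI Y hY Z hZ
    rw [mem_inter] at hr
    obtain ⟨hrY, hrZ⟩ := hr
    have hpZ : p ∉ Z := fun h => trip p hpX hpY h
    have hqY : q ∉ Y := fun h => trip q hqX h hqZ
    have hrX : r ∉ X := fun h => trip r h hrY hrZ
    have hpq : p ≠ q := fun h => hpZ (h ▸ hqZ)
    have hpr : p ≠ r := fun h => hpZ (h ▸ hrZ)
    have hqr : q ≠ r := fun h => hqY (h ▸ hrY)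
    obtain ⟨x, hxX, hxp, hxq, hXe⟩ := third X (h3 X hX) p q hpX hqX hpq
    obtain ⟨y, hyY, hyp, hyr, hYe⟩ := third Y (h3 Y hY) p r hpY hrY hpr
    obtain ⟨z, hzZ, hzq, hzr, hZe⟩ := third Z (h3 Z hZ) q r hqZ hrZ hqr
    have hxr : x ≠ r := fun h => hrX (h ▸ hxX)
    have hyq : y ≠ q := fun h => hqY (h ▸ hyY)
    have hzp : z ≠ p := fun h => hpZ (h ▸ hzZ)
    by_cases hxY : x ∈ Y
    · -- R copy with (X, Y, Z), a=p, b=x, c=q, d=r, e=z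
      have hxZ : x ∉ Z := fun h => trip x hxX hxY h
      have hzx : z ≠ x := fun h => hxZ (h ▸ hzZ)
      have hXe2 : X = {p, x, q} :=
        eq_three X (h3 X hX) p x q hpX hxX hqX (Ne.symm hxp) hpq hxq
      have hYe2 : Y = {p, x, r} :=
        eq_three Y (h3 Y hY) p x r hpY hxY hrY (Ne.symm hxp) hpr hxr
      right; right
      exact copyR T X Y Z hX hY hZ p x q r z (Ne.symm hxp) hpq hpr (Ne.symm hzp)
        hxq hxr (Ne.symm hzx) hqr (Ne.symm hzq) (Ne.symm hzr) hXe2 hYe2 hZe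
    by_cases hxZ : x ∈ Z
    · -- R copy with (X, Z, Y), a=q, b=x, c=p, d=r, e=y
      have hxy : x ≠ y := fun h => hxY (by rw [h]; exact hyY)
      have hXe2 : X = {q, x, p} :=
        eq_three X (h3 X hX) q x p hqX hxX hpX (Ne.symm hxq) (Ne.symm hpq) (fun h => hxp h)
      have hZe2 : Z = {q, x, r} :=
        eq_three Z (h3 Z hZ) q x r hqZ hxZ hrZ (Ne.symm hxq) hqr hxr
      right; right
      exact copyR T X Z Y hX hZ hY q x p r y (Ne.symm hxq) (Ne.symm hpq) hqr
        (Ne.symm hyq) hxp hxr hxy hpr (Ne.symm hyp) (Ne.symm hyr) hXe2 hZe2 hYe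
    by_cases hyZ : y ∈ Z
    · -- R copy with (Y, Z, X), a=r, b=y, c=p, d=q, e=x
      have hxy : x ≠ y := fun h => hxY (by rw [h]; exact hyY)
      have hYe2 : Y = {r, y, p} :=
        eq_three Y (h3 Y hY) r y p hrY hyY hpY (Ne.symm hyr) (Ne.symm hpr) hyp
      have hZe2 : Z = {r, y, q} :=
        eq_three Z (h3 Z hZ) r y q hrZ hyZ hqZ (Ne.symm hyr) (Ne.symm hqr) hyq
      right; right
      exact copyR T Y Z X hY hZ hX r y p q x (Ne.symm hyr) (Ne.symm hpr) (Ne.symm hqr)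
        (Ne.symm hxr) hyp hyq (Ne.symm hxy) hpq (Ne.symm hxp) (Ne.symm hxq) hYe2 hZe2 hXe
    · -- S copy: a=p, b=q, c=x, d=r, e=y, g=z
      have hxy : x ≠ y := fun h => hxY (by rw [h]; exact hyY)
      have hxz : x ≠ z := fun h => hxZ (by rw [h]; exact hzZ)
      have hyz : y ≠ z := fun h => hyZ (by rw [h]; exact hzZ)
      right; left
      exact copyS T X Y Z hX hY hZ p q x r y z hpq (Ne.symm hxp) hpr (Ne.symm hyp)
        (Ne.symm hzp) (Ne.symm hxq) hqr (Ne.symm hyq) (Ne.symm hzq) hxr hxy hxz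
        (Ne.symm hyr) (Ne.symm hzr) hyz hXe hYe hZe
  · -- every three sets of T have a common point
    push_neg at hC
    have hC' : ∀ X ∈ T, ∀ Y ∈ T, ∀ Z ∈ T, (X ∩ Y ∩ Z).Nonempty := by
      intro X hX Y hY Z hZ
      exact hC X hX Y hY Z hZ
    have key : ∀ X ∈ T, ∀ Y ∈ T, ∀ w : ℕ, X ∩ Y ⊆ {w} → False := by
      intro X hX Y hY w hsub
      obtain ⟨Z, hZ, hwZ⟩ := hnt w
      obtain ⟨t, ht⟩ := hC' X hX Y hY Z hZ
      rw [mem_inter, mem_inter] at ht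
      have htw : t = w := by
        have := hsub (mem_inter.mpr ⟨ht.1.1, ht.1.2⟩)
        simpa using this
      exact hwZ (htw ▸ ht.2)
    obtain ⟨A, hA⟩ := hne
    obtain ⟨a1, a2, a3, h12, h13, h23, hAe⟩ := card_eq_three.mp (h3 A hA)
    have ha1A : a1 ∈ A := by rw [hAe]; simp
    have ha2A : a2 ∈ A := by rw [hAe]; simp
    have ha3A : a3 ∈ A := by rw [hAe]; simp
    obtain ⟨B, hB, h1B⟩ := hnt a1
    have ha2B : a2 ∈ B := by
      by_contra h
      refine key A hA B hB a3 fun t ht => ?_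
      rw [mem_inter, hAe] at ht
      simp only [mem_insert, mem_singleton] at ht
      obtain ⟨h1 | h1 | h1, h2⟩ := ht
      · exact absurd (h1 ▸ h2) h1B
      · exact absurd (h1 ▸ h2) h
      · rw [mem_singleton]; exact h1
    have ha3B : a3 ∈ B := by
      by_contra h
      refine key A hA B hB a2 fun t ht => ?_
      rw [mem_inter, hAe] at ht
      simp only [mem_insert, mem_singleton] at ht
      obtain ⟨h1 | h1 | h1, h2⟩ := ht
      · exact absurd (h1 ▸ h2) h1B
      · rw [mem_singleton]; exact h1
      · exact absurd (h1 ▸ h2) h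
    obtain ⟨a4, ha4B, h42, h43, hBe⟩ := third B (h3 B hB) a2 a3 ha2B ha3B h23
    have h41 : a4 ≠ a1 := fun h => h1B (h ▸ ha4B)
    obtain ⟨C, hCT, h2C⟩ := hnt a2
    have ha1C : a1 ∈ C := by
      by_contra h
      refine key A hA C hCT a3 fun t ht => ?_
      rw [mem_inter, hAe] at ht
      simp only [mem_insert, mem_singleton] at ht
      obtain ⟨h1 | h1 | h1, h2⟩ := ht
      · exact absurd (h1 ▸ h2) h
      · exact absurd (h1 ▸ h2) h2C
      · rw [mem_singleton]; exact h1
    have ha3C : a3 ∈ C := by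
      by_contra h
      refine key A hA C hCT a1 fun t ht => ?_
      rw [mem_inter, hAe] at ht
      simp only [mem_insert, mem_singleton] at ht
      obtain ⟨h1 | h1 | h1, h2⟩ := ht
      · rw [mem_singleton]; exact h1
      · exact absurd (h1 ▸ h2) h2C
      · exact absurd (h1 ▸ h2) h
    have ha4C : a4 ∈ C := by
      by_contra h
      refine key B hB C hCT a3 fun t ht => ?_
      rw [mem_inter, hBe] at ht
      simp only [mem_insert, mem_singleton] at ht
      obtain ⟨h1 | h1 | h1, h2⟩ := ht
      · exact absurd (h1 ▸ h2) h2C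
      · rw [mem_singleton]; exact h1
      · exact absurd (h1 ▸ h2) h
    have hCe : C = {a1, a3, a4} :=
      eq_three C (h3 C hCT) a1 a3 a4 ha1C ha3C ha4C h13 (Ne.symm h41) (Ne.symm h43)
    obtain ⟨D, hDT, h3D⟩ := hnt a3
    have ha1D : a1 ∈ D := by
      by_contra h
      refine key A hA D hDT a2 fun t ht => ?_
      rw [mem_inter, hAe] at ht
      simp only [mem_insert, mem_singleton] at ht
      obtain ⟨h1 | h1 | h1, h2⟩ := ht
      · exact absurd (h1 ▸ h2) h
      · rw [mem_singleton]; exact h1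
      · exact absurd (h1 ▸ h2) h3D
    have ha2D : a2 ∈ D := by
      by_contra h
      refine key A hA D hDT a1 fun t ht => ?_
      rw [mem_inter, hAe] at ht
      simp only [mem_insert, mem_singleton] at ht
      obtain ⟨h1 | h1 | h1, h2⟩ := ht
      · rw [mem_singleton]; exact h1
      · exact absurd (h1 ▸ h2) h
      · exact absurd (h1 ▸ h2) h3D
    have ha4D : a4 ∈ D := by
      by_contra h
      refine key B hB D hDT a2 fun t ht => ?_
      rw [mem_inter, hBe] at ht
      simp only [mem_insert, mem_singleton] at ht
      obtain ⟨h1 | h1 | h1, h2⟩ := ht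
      · rw [mem_singleton]; exact h1
      · exact absurd (h1 ▸ h2) h3D
      · exact absurd (h1 ▸ h2) h
    have hDe : D = {a1, a2, a4} :=
      eq_three D (h3 D hDT) a1 a2 a4 ha1D ha2D ha4D h12 (Ne.symm h41) (Ne.symm h42)
    have card2 : ∀ X ∈ T, ∀ Y ∈ T, X ≠ Y → (X ∩ Y).card = 2 := by
      intro X hX Y hY hXY
      have hle : (X ∩ Y).card ≤ 3 := by
        have := card_le_card (show X ∩ Y ⊆ X from inter_subset_left)
        rw [h3 X hX] at this
        exact this
      have hne3 : (X ∩ Y).card ≠ 3 := by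
        intro h
        have h1 : X ∩ Y = X :=
          eq_of_subset_of_card_le inter_subset_left (by rw [h3 X hX, h])
        have h2 : X ⊆ Y := by rw [← h1]; exact inter_subset_right
        exact hXY (eq_of_subset_of_card_le h2 (by rw [h3 X hX, h3 Y hY]))
      have hgt : ¬(X ∩ Y).card ≤ 1 := by
        intro h
        obtain ⟨w, hw⟩ := card_le_one_iff_subset_singleton.mp h
        exact key X hX Y hY w hw
      omega
    have hVcard : ({a1, a2, a3, a4} : Finset ℕ).card = 4 := by
      have m1 : a1 ∉ ({a2, a3, a4} : Finset ℕ) := by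
        simp only [mem_insert, mem_singleton]
        push_neg
        exact ⟨h12, h13, fun h => h41 h.symm⟩
      have m2 : a2 ∉ ({a3, a4} : Finset ℕ) := by
        simp only [mem_insert, mem_singleton]
        push_neg
        exact ⟨h23, fun h => h42 h.symm⟩
      have m3 : a3 ∉ ({a4} : Finset ℕ) := by
        simp only [mem_singleton]
        exact fun h => h43 h.symm
      rw [card_insert_of_notMem m1, card_insert_of_notMem m2,
        card_insert_of_notMem m3, card_singleton]
    have hAV : A ⊆ ({a1, a2, a3, a4} : Finset ℕ) := by
      rw [hAe]; intro t ht; simp only [mem_insert, mem_singleton] at ht ⊢; tauto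
    have hBV : B ⊆ ({a1, a2, a3, a4} : Finset ℕ) := by
      rw [hBe]; intro t ht; simp only [mem_insert, mem_singleton] at ht ⊢; tauto
    have hCV : C ⊆ ({a1, a2, a3, a4} : Finset ℕ) := by
      rw [hCe]; intro t ht; simp only [mem_insert, mem_singleton] at ht ⊢; tauto
    have hDV : D ⊆ ({a1, a2, a3, a4} : Finset ℕ) := by
      rw [hDe]; intro t ht; simp only [mem_insert, mem_singleton] at ht ⊢; tauto
    left
    refine ⟨{a1, a2, a3, a4}, hVcard, ?_⟩
    ext E
    rw [mem_powersetCard]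
    constructor
    · intro hE
      refine ⟨?_, h3 E hE⟩
      by_contra hEV
      obtain ⟨e, heE, heV⟩ := not_subset.mp hEV
      have hcardEV : (E ∩ ({a1, a2, a3, a4} : Finset ℕ)).card ≤ 2 := by
        have hsub : E ∩ ({a1, a2, a3, a4} : Finset ℕ) ⊆ E.erase e := by
          intro t ht
          rw [mem_inter] at ht
          exact mem_erase.mpr ⟨fun h => heV (h ▸ ht.2), ht.1⟩
        have := card_le_card hsub
        rw [card_erase_of_mem heE, h3 E hE] at this
        omega
      have main : ∀ P, P ∈ T → P ⊆ ({a1, a2, a3, a4} : Finset ℕ) → e ∉ P →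
          E ∩ ({a1, a2, a3, a4} : Finset ℕ) ⊆ P := by
        intro P hP hPV heP
        have hEP : E ≠ P := fun h => heP (h ▸ heE)
        have h2' : (E ∩ P).card = 2 := card2 E hE P hP hEP
        have hsub : E ∩ P ⊆ E ∩ ({a1, a2, a3, a4} : Finset ℕ) :=
          inter_subset_inter (Finset.Subset.refl E) hPV
        have heq : E ∩ P = E ∩ ({a1, a2, a3, a4} : Finset ℕ) :=
          eq_of_subset_of_card_le hsub (by omega)
        rw [← heq]
        exact inter_subset_right
      have heA : e ∉ A := fun h => heV (hAV h)
      have heB : e ∉ B := fun h => heV (hBV h)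
      have heC : e ∉ C := fun h => heV (hCV h)
      have heD : e ∉ D := fun h => heV (hDV h)
      obtain ⟨t, ht⟩ := hI E hE A hA
      rw [mem_inter] at ht
      have htV : t ∈ E ∩ ({a1, a2, a3, a4} : Finset ℕ) :=
        mem_inter.mpr ⟨ht.1, hAV ht.2⟩
      have htB := main B hB hBV heB htV
      have htC := main C hCT hCV heC htV
      have htD := main D hDT hDV heD htV
      have htA : t ∈ A := ht.2
      rw [hAe] at htA
      simp only [mem_insert, mem_singleton] at htA
      rcases htA with rfl | rfl | rfl
      · exact h1B htB
      · exact h2C htC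
      · exact h3D htD
    · rintro ⟨hEV, hE3⟩
      have hnsub : ¬({a1, a2, a3, a4} : Finset ℕ) ⊆ E := by
        intro h
        have := card_le_card h
        rw [hE3, hVcard] at this
        omega
      obtain ⟨w, hwV, hwE⟩ := not_subset.mp hnsub
      simp only [mem_insert, mem_singleton] at hwV
      have hgen : ∀ u v s : ℕ, u ∈ E → False → True := fun _ _ _ _ h => h.elim
      rcases hwV with rfl | rfl | rfl | rfl
      · -- w = a1, E = {a2,a3,a4} = B
        have hsub : E ⊆ ({a2, a3, a4} : Finset ℕ) := by
          intro t ht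
          have := hEV ht
          simp only [mem_insert, mem_singleton] at this ⊢
          rcases this with rfl | h' | h' | h'
          · exact absurd ht hwE
          · tauto
          · tauto
          · tauto
        have hEeq : E = {a2, a3, a4} :=
          eq_of_subset_of_card_le hsub
            (by rw [hE3, card_eq_three.mpr ⟨a2, a3, a4, h23, Ne.symm h42, Ne.symm h43, rfl⟩])
        rw [hEeq, ← hBe]; exact hB
      · -- w = a2, E = {a1,a3,a4} = C
        have hsub : E ⊆ ({a1, a3, a4} : Finset ℕ) := by
          intro t ht
          have := hEV ht
          simp only [mem_insert, mem_singleton] at this ⊢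
          rcases this with h' | rfl | h' | h'
          · tauto
          · exact absurd ht hwE
          · tauto
          · tauto
        have hEeq : E = {a1, a3, a4} :=
          eq_of_subset_of_card_le hsub
            (by rw [hE3, card_eq_three.mpr ⟨a1, a3, a4, h13, Ne.symm h41, Ne.symm h43, rfl⟩])
        rw [hEeq, ← hCe]; exact hCT
      · -- w = a3, E = {a1,a2,a4} = D
        have hsub : E ⊆ ({a1, a2, a4} : Finset ℕ) := by
          intro t ht
          have := hEV ht
          simp only [mem_insert, mem_singleton] at this ⊢
          rcases this with h' | h' | rfl | h'
          · tauto
          · tauto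
          · exact absurd ht hwE
          · tauto
        have hEeq : E = {a1, a2, a4} :=
          eq_of_subset_of_card_le hsub
            (by rw [hE3, card_eq_three.mpr ⟨a1, a2, a4, h12, Ne.symm h41, Ne.symm h42, rfl⟩])
        rw [hEeq, ← hDe]; exact hDT
      · -- w = a4, E = {a1,a2,a3} = A
        have hsub : E ⊆ ({a1, a2, a3} : Finset ℕ) := by
          intro t ht
          have := hEV ht
          simp only [mem_insert, mem_singleton] at this ⊢
          rcases this with h' | h' | h' | rfl
          · tauto
          · tauto
          · tauto
          · exact absurd ht hwE
        have hEeq : E = {a1, a2, a3} :=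
          eq_of_subset_of_card_le hsub
            (by rw [hE3, card_eq_three.mpr ⟨a1, a2, a3, h12, h13, h23, rfl⟩])
        rw [hEeq, ← hAe]; exact hA

/-- Let `F ⊆ ([n] choose k)` be a saturated intersecting family with covering number `3`
whose family `T` of 3-element covers is nonempty and non-trivial.  Then `T` is the complete
3-uniform hypergraph on some 4 vertices, or `T` contains an isomorphic copy of
`S = {{1,2,3},{1,4,5},{2,4,6}}` or of `R = {{1,2,3},{1,4,5},{2,3,5}}`. -/
theorem three_covers_structure
    (n k : ℕ) (hnk : 2 * k ≤ n)
    (F : Finset (Finset ℕ))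
    (hFsub : ∀ A ∈ F, A ⊆ Finset.Icc 1 n ∧ A.card = k)
    (hint : ∀ A ∈ F, ∀ A' ∈ F, (A ∩ A').Nonempty)
    (hsat : ∀ G ⊆ Finset.Icc 1 n, G.card = k → G ∉ F → ∃ A ∈ F, A ∩ G = ∅)
    -- τ(F) ≥ 3 : no set of size ≤ 2 covers F
    (hτ : ∀ S ⊆ Finset.Icc 1 n, S.card ≤ 2 → ∃ A ∈ F, S ∩ A = ∅)
    (T : Finset (Finset ℕ))
    (hT : ∀ X : Finset ℕ, X ∈ T ↔
      X ⊆ Finset.Icc 1 n ∧ X.card = 3 ∧ ∀ A ∈ F, (X ∩ A).Nonempty)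
    (hne : T.Nonempty)
    (hnontriv : ¬ ∃ x, ∀ X ∈ T, x ∈ X) :
    (∃ V : Finset ℕ, V.card = 4 ∧ T = V.powersetCard 3) ∨
    (∃ f : ℕ → ℕ, Function.Injective f ∧
      ∀ X ∈ ({({1, 2, 3} : Finset ℕ), {1, 4, 5}, {2, 4, 6}} : Finset (Finset ℕ)),
        X.image f ∈ T) ∨
    (∃ f : ℕ → ℕ, Function.Injective f ∧
      ∀ X ∈ ({({1, 2, 3} : Finset ℕ), {1, 4, 5}, {2, 3, 5}} : Finset (Finset ℕ)),
        X.image f ∈ T) := by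
  classical
  -- F is nonempty
  obtain ⟨A0, hA0, -⟩ := hτ ∅ (by simp) (by simp)
  -- k ≥ 3
  have hk3 : 3 ≤ k := by
    by_contra h
    obtain ⟨A', hA', hdisj⟩ :=
      hτ A0 (hFsub A0 hA0).1 (by have := (hFsub A0 hA0).2; omega)
    exact (hint A0 hA0 A' hA').ne_empty hdisj
  -- T is 3-uniform
  have h3 : ∀ X ∈ T, X.card = 3 := fun X hX => ((hT X).1 hX).2.1
  -- T is intersecting
  have hTint : ∀ X ∈ T, ∀ Y ∈ T, (X ∩ Y).Nonempty := by
    intro X hX Y hY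
    by_contra hcon
    rw [not_nonempty_iff_eq_empty] at hcon
    obtain ⟨hXI, hX3, hXcov⟩ := (hT X).1 hX
    obtain ⟨hYI, hY3, hYcov⟩ := (hT Y).1 hY
    have hXsub : X ⊆ Finset.Icc 1 n \ Y := by
      intro t ht
      refine mem_sdiff.mpr ⟨hXI ht, fun hty => ?_⟩
      have : t ∈ X ∩ Y := mem_inter.mpr ⟨ht, hty⟩
      rw [hcon] at this
      simp at this
    have hcardsd : (Finset.Icc 1 n \ Y).card = n - 3 := by
      rw [card_sdiff_of_subset hYI, Nat.card_Icc, hY3]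
      omega
    obtain ⟨G, hXG, hGsub, hGcard⟩ :=
      exists_subsuperset_card_eq (n := k) hXsub (by rw [hX3]; omega) (by rw [hcardsd]; omega)
    have hGIcc : G ⊆ Finset.Icc 1 n := hGsub.trans sdiff_subset
    have hGF : G ∈ F := by
      by_contra hG
      obtain ⟨A, hAF, hdA⟩ := hsat G hGIcc hGcard hG
      obtain ⟨t, ht⟩ := hXcov A hAF
      rw [mem_inter] at ht
      have : t ∈ A ∩ G := mem_inter.mpr ⟨ht.2, hXG ht.1⟩
      rw [hdA] at this
      simp at this
    obtain ⟨t, ht⟩ := hYcov G hGF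
    rw [mem_inter] at ht
    exact (mem_sdiff.mp (hGsub ht.2)).2 ht.1
  push_neg at hnontriv
  exact structure_lemma T h3 hTint hne hnontriv
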